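/- Let G be a group with a left-order <. Let u, v, t ∈ G with ut = tu and vt = tv, and let n₁, n₂ be integers. If v^{-1} u v = u^{-1}, t^{n₁} < v < t^{n₂}, and 1 < t, then t^{-1} < u < t. -/

import Mathlib

private lemma leftMono {G : Type*} [Group G] [LinearOrder G]
    [CovariantClass G G (· * ·) (· < ·)] : MulLeftMono G :=
  covariantClass_le_of_lt G G (· * ·)

private lemma zpow_le_zpow_aux {G : Type*} [Group G] [LinearOrder G]
    [CovariantClass G G (· * ·) (· < ·)]
    {t : G} (ht : 1 < t) {a b : ℤ} (hab : a ≤ b) : t ^ a ≤ t ^ b := by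
  haveI := leftMono (G := G)
  have h1 : (1 : G) ≤ t ^ (b - a) := one_le_zpow ht.le (by omega)
  calc t ^ a = t ^ a * 1 := (mul_one _).symm
    _ ≤ t ^ a * t ^ (b - a) := mul_le_mul_right h1 _
    _ = t ^ b := by rw [← zpow_add]; ring_nf

private lemma key_aux {G : Type*} [Group G] [LinearOrder G]
    [CovariantClass G G (· * ·) (· < ·)]
    (w v t : G) (hwt : Commute w t) (hvt : Commute v t)
    (hconj : v⁻¹ * w * v = w⁻¹) (n₁ n₂ : ℤ)
    (hv1 : t ^ n₁ < v) (hv2 : v < t ^ n₂) (ht : 1 < t) : w < t := by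
  haveI := leftMono (G := G)
  by_contra h
  push_neg at h  -- t ≤ w
  set k : ℤ := |n₂ - n₁| + 1 with hk
  have hk0 : 0 ≤ k := by positivity
  -- 1 ≤ (t⁻¹ * w) ^ k
  have h0 : (1 : G) ≤ t⁻¹ * w := by
    simpa using mul_le_mul_right h t⁻¹
  have h1 : (1 : G) ≤ (t⁻¹ * w) ^ k := one_le_zpow h0 hk0
  have hcomm : Commute t⁻¹ w := (hwt.symm).inv_left
  have h2 : (t⁻¹ * w) ^ k = t ^ (-k) * w ^ k := by
    rw [hcomm.mul_zpow, inv_zpow, zpow_neg]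
  -- t ^ k ≤ w ^ k
  have h3 : t ^ k ≤ w ^ k := by
    have := mul_le_mul_right h1 (t ^ k)
    rw [h2, mul_one, ← mul_assoc] at this
    simpa [← zpow_add] using this
  -- w ^ (-k) ≤ t ^ (-k)
  have h5 : (1 : G) ≤ w ^ k * t ^ (-k) := by
    have hc : Commute (t ^ (-k)) (w ^ k) := (hwt.symm).zpow_zpow (-k) k
    rw [← hc.eq, ← h2]; exact h1
  have h4 : w ^ (-k) ≤ t ^ (-k) := by
    have := mul_le_mul_right h5 (w ^ (-k))
    rw [mul_one, ← mul_assoc, ← zpow_add] at this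
    simpa using this
  -- conjugation of powers
  have hc2 : w ^ k * v = v * w ^ (-k) := by
    have hz : (v⁻¹ * w * v⁻¹⁻¹) ^ k = v⁻¹ * w ^ k * v⁻¹⁻¹ := conj_zpow
    rw [inv_inv, hconj] at hz
    have : v⁻¹ * w ^ k * v = w ^ (-k) := by
      rw [← hz, inv_zpow, ← zpow_neg]
    calc w ^ k * v = v * (v⁻¹ * w ^ k * v) := by group
      _ = v * w ^ (-k) := by rw [this]
  -- the chain
  have chain : t ^ (n₁ + k) < t ^ (n₂ - k) := by
    calc t ^ (n₁ + k) = t ^ n₁ * t ^ k := by rw [zpow_add]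
      _ ≤ t ^ n₁ * w ^ k := mul_le_mul_right h3 _
      _ = w ^ k * t ^ n₁ := ((hwt.zpow_zpow k n₁).eq).symm
      _ < w ^ k * v := mul_lt_mul_right hv1 _
      _ = v * w ^ (-k) := hc2
      _ ≤ v * t ^ (-k) := mul_le_mul_right h4 _
      _ = t ^ (-k) * v := (hvt.zpow_right (-k)).eq
      _ < t ^ (-k) * t ^ n₂ := mul_lt_mul_right hv2 _
      _ = t ^ (n₂ - k) := by rw [← zpow_add]; ring_nf
  have hle : t ^ (n₂ - k) ≤ t ^ (n₁ + k) := by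
    apply zpow_le_zpow_aux ht
    rcases abs_cases (n₂ - n₁) with ⟨h1, _⟩ | ⟨h1, _⟩ <;> omega
  exact absurd (chain.trans_le hle) (lt_irrefl _)

theorem stmt_4 {G : Type*} [Group G] [LinearOrder G]
    [CovariantClass G G (· * ·) (· < ·)]
    (u v t : G) (hut : u * t = t * u) (hvt : v * t = t * v) (n₁ n₂ : ℤ)
    (hconj : v⁻¹ * u * v = u⁻¹)
    (hv1 : t ^ n₁ < v) (hv2 : v < t ^ n₂) (ht : 1 < t) :
    t⁻¹ < u ∧ u < t := by
  haveI := leftMono (G := G)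
  have hut' : Commute u t := hut
  have hvt' : Commute v t := hvt
  have h2 : u < t := key_aux u v t hut' hvt' hconj n₁ n₂ hv1 hv2 ht
  have hconj' : v⁻¹ * u⁻¹ * v = u⁻¹⁻¹ := by
    have h : v⁻¹ * u⁻¹ * v = (v⁻¹ * u * v)⁻¹ := by
      simp [mul_inv_rev, mul_assoc]
    rw [h, hconj]
  have h1 : u⁻¹ < t := key_aux u⁻¹ v t hut'.inv_left hvt' hconj' n₁ n₂ hv1 hv2 ht
  have h3 : (1 : G) < u * t := by
    have := mul_lt_mul_right h1 u
    simpa using this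
  rw [hut] at h3
  have := mul_lt_mul_right h3 t⁻¹
  rw [mul_one, ← mul_assoc, inv_mul_cancel, one_mul] at this
  exact ⟨this, h2⟩
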